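/- If f is a face of the positive semidefinite cone S^n_+ and X ∈ f has maximal rank r with orthogonal spectral decomposition X = [V U] diag(D, 0) [V U]^T where D is r×r positive definite, then f = V S^r_+ V^T, i.e., f consists exactly of matrices of the form V R V^T with R an r×r positive semidefinite matrix. -/

import Mathlib

open Matrix

lemma psd_conj' {n r : ℕ} (V : Matrix (Fin n) (Fin r) ℝ) {S : Matrix (Fin r) (Fin r) ℝ}
    (hS : S.PosSemidef) : (V * S * Vᵀ).PosSemidef := by
  simpa using hS.mul_mul_conjTranspose_same V

open scoped MatrixOrder in
lemma psd_bound' {r : ℕ} {R : Matrix (Fin r) (Fin r) ℝ} (hR : R.PosSemidef) :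
    ∃ K : ℝ, 0 ≤ K ∧ ∀ x : Fin r → ℝ, x ⬝ᵥ R *ᵥ x ≤ K * ∑ i, x i ^ 2 := by
  obtain ⟨B, hB⟩ := CStarAlgebra.nonneg_iff_eq_star_mul_self.mp hR.nonneg
  rw [star_eq_conjTranspose] at hB
  subst hB
  refine ⟨∑ i, ∑ j, B i j ^ 2, by positivity, fun x => ?_⟩
  have e1 : x ⬝ᵥ (Bᴴ * B) *ᵥ x = ∑ i, (B *ᵥ x) i ^ 2 := by
    rw [← mulVec_mulVec, dotProduct_mulVec]
    simp only [conjTranspose_eq_transpose_of_trivial, vecMul_transpose]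
    simp [dotProduct, sq]
  rw [e1, Finset.sum_mul]
  apply Finset.sum_le_sum
  intro i _
  have := Finset.sum_mul_sq_le_sq_mul_sq Finset.univ (fun j => B i j) x
  simpa [mulVec, dotProduct] using this

lemma mat_eq_zero_of_mulVec' {m n : ℕ} {M : Matrix (Fin m) (Fin n) ℝ}
    (h : ∀ u, M *ᵥ u = 0) : M = 0 := by
  ext i j
  have := congrFun (h (Pi.single j 1)) i
  simpa using this

theorem stmt1 {n r : ℕ} (f : Set (Matrix (Fin n) (Fin n) ℝ))
    (hfPSD : ∀ X ∈ f, X.PosSemidef)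
    (hclosed : IsClosed f)
    (hconvex : Convex ℝ f)
    (hcone : ∀ X ∈ f, ∀ c : ℝ, 0 ≤ c → c • X ∈ f)
    (hface : ∀ X Y : Matrix (Fin n) (Fin n) ℝ, X.PosSemidef → Y.PosSemidef →
      X + Y ∈ f → X ∈ f ∧ Y ∈ f)
    (X : Matrix (Fin n) (Fin n) ℝ) (hXf : X ∈ f)
    (hmax : ∀ Y ∈ f, Y.rank ≤ r) (hrank : X.rank = r)
    (V : Matrix (Fin n) (Fin r) ℝ) (D : Matrix (Fin r) (Fin r) ℝ)
    (hV : Vᵀ * V = 1) (hD : D.PosDef)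
    (hDdiag : ∃ dvec : Fin r → ℝ, D = Matrix.diagonal dvec)
    (hXdecomp : X = V * D * Vᵀ) :
    f = {Z | ∃ R : Matrix (Fin r) (Fin r) ℝ, R.PosSemidef ∧ Z = V * R * Vᵀ} := by
  obtain ⟨dvec, rfl⟩ := hDdiag
  have hXpsd := hfPSD X hXf
  ext Z
  simp only [Set.mem_setOf_eq]
  constructor
  · -- subset direction
    intro hZf
    have hZpsd := hfPSD Z hZf
    have hXZf : X + Z ∈ f := by
      have h2 : (1/2 : ℝ) • X + (1/2 : ℝ) • Z ∈ f :=
        hconvex hXf hZf (by norm_num) (by norm_num) (by norm_num)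
      have h3 := hcone _ h2 2 (by norm_num)
      rw [smul_add, smul_smul, smul_smul] at h3
      norm_num at h3
      exact h3
    have hXZpsd := hfPSD _ hXZf
    have hsplit : ∀ v : Fin n → ℝ, (X + Z) *ᵥ v = 0 → X *ᵥ v = 0 ∧ Z *ᵥ v = 0 := by
      intro v hv
      have h1 : v ⬝ᵥ X *ᵥ v + v ⬝ᵥ Z *ᵥ v = 0 := by
        have : v ⬝ᵥ (X + Z) *ᵥ v = 0 := by rw [hv, dotProduct_zero]
        rw [add_mulVec, dotProduct_add] at this
        exact this
      have hx0 : 0 ≤ v ⬝ᵥ X *ᵥ v := by simpa using hXpsd.dotProduct_mulVec_nonneg v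
      have hz0 : 0 ≤ v ⬝ᵥ Z *ᵥ v := by simpa using hZpsd.dotProduct_mulVec_nonneg v
      have hx : v ⬝ᵥ X *ᵥ v = 0 := by linarith
      have hz : v ⬝ᵥ Z *ᵥ v = 0 := by linarith
      constructor
      · exact (hXpsd.dotProduct_mulVec_zero_iff v).mp (by simpa using hx)
      · exact (hZpsd.dotProduct_mulVec_zero_iff v).mp (by simpa using hz)
    have hle : LinearMap.ker (X + Z).mulVecLin ≤ LinearMap.ker X.mulVecLin := by
      intro v hv
      rw [LinearMap.mem_ker, mulVecLin_apply] at *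
      exact (hsplit v hv).1
    have hXn := X.mulVecLin.finrank_range_add_finrank_ker
    have hXZn := (X + Z).mulVecLin.finrank_range_add_finrank_ker
    have hrk : (X + Z).rank ≤ X.rank := by rw [hrank]; exact hmax _ hXZf
    have hfr : Module.finrank ℝ (LinearMap.ker X.mulVecLin) ≤
        Module.finrank ℝ (LinearMap.ker (X + Z).mulVecLin) := by
      have e1 : X.rank = Module.finrank ℝ (LinearMap.range X.mulVecLin) := rfl
      have e2 : (X + Z).rank = Module.finrank ℝ (LinearMap.range (X + Z).mulVecLin) := rfl
      rw [← e1] at hXn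
      rw [← e2] at hXZn
      omega
    have hker_eq := Submodule.eq_of_le_of_finrank_le hle hfr
    have hkerZ : ∀ v, X *ᵥ v = 0 → Z *ᵥ v = 0 := by
      intro v hv
      have hvmem : v ∈ LinearMap.ker X.mulVecLin := by rwa [LinearMap.mem_ker, mulVecLin_apply]
      rw [← hker_eq, LinearMap.mem_ker, mulVecLin_apply] at hvmem
      exact (hsplit v hvmem).2
    have hVt : ∀ v : Fin n → ℝ, Vᵀ *ᵥ v = 0 → X *ᵥ v = 0 := by
      intro v hv
      rw [hXdecomp, ← Matrix.mulVec_mulVec, hv, mulVec_zero]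
    have hZW : Z * (1 - V * Vᵀ) = 0 := by
      apply mat_eq_zero_of_mulVec'
      intro u
      rw [← Matrix.mulVec_mulVec]
      apply hkerZ
      apply hVt
      rw [Matrix.mulVec_mulVec]
      have : Vᵀ * (1 - V * Vᵀ) = 0 := by
        rw [Matrix.mul_sub, Matrix.mul_one, ← Matrix.mul_assoc, hV, Matrix.one_mul, sub_self]
      rw [this, zero_mulVec]
    have h1 : Z = Z * V * Vᵀ := by
      rw [Matrix.mul_sub, Matrix.mul_one] at hZW
      rw [sub_eq_zero] at hZW
      rw [Matrix.mul_assoc]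
      exact hZW
    have hZsymm : Zᵀ = Z := by
      have := hZpsd.1
      simpa using this.eq
    have h2 : Z = V * Vᵀ * Z := by
      have h3 := congrArg Matrix.transpose h1
      rw [hZsymm, Matrix.transpose_mul, Matrix.transpose_mul, transpose_transpose, hZsymm,
        ← Matrix.mul_assoc] at h3
      exact h3
    have hRpsd : (Vᵀ * Z * V).PosSemidef := by
      simpa using hZpsd.mul_mul_conjTranspose_same Vᵀ
    refine ⟨Vᵀ * Z * V, hRpsd, ?_⟩
    calc Z = Z * V * Vᵀ := h1
      _ = (V * Vᵀ * Z) * V * Vᵀ := by rw [← h2]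
      _ = V * (Vᵀ * Z * V) * Vᵀ := by simp only [Matrix.mul_assoc]
  · -- superset direction
    rintro ⟨R, hR, rfl⟩
    have hdpos : ∀ i, 0 < dvec i := Matrix.posDef_diagonal_iff.mp hD
    obtain ⟨K, hK0, hKb⟩ := psd_bound' hR
    set c : ℝ := K * ∑ i, (dvec i)⁻¹ with hc
    have hc0 : 0 ≤ c := by
      apply mul_nonneg hK0
      apply Finset.sum_nonneg
      intro i _
      exact le_of_lt (inv_pos.mpr (hdpos i))
    have hcd : ∀ i, K ≤ c * dvec i := by
      intro i
      have h1 : (dvec i)⁻¹ ≤ ∑ j, (dvec j)⁻¹ :=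
        Finset.single_le_sum (f := fun j => (dvec j)⁻¹)
          (fun j _ => le_of_lt (inv_pos.mpr (hdpos j))) (Finset.mem_univ i)
      calc K = K * ((dvec i)⁻¹ * dvec i) := by
              rw [inv_mul_cancel₀ (ne_of_gt (hdpos i)), mul_one]
        _ ≤ K * ((∑ j, (dvec j)⁻¹) * dvec i) := by
              apply mul_le_mul_of_nonneg_left _ hK0
              exact mul_le_mul_of_nonneg_right h1 (le_of_lt (hdpos i))
        _ = c * dvec i := by rw [hc]; ring
    have hpsd2 : (c • Matrix.diagonal dvec - R).PosSemidef := by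
      rw [posSemidef_iff_dotProduct_mulVec]
      constructor
      · rw [Matrix.IsHermitian, conjTranspose_sub, conjTranspose_smul, hR.1,
          diagonal_conjTranspose]
        simp
      · intro x
        simp only [star_trivial, sub_mulVec, dotProduct_sub, sub_nonneg, smul_mulVec,
          dotProduct_smul]
        have e1 : x ⬝ᵥ (Matrix.diagonal dvec) *ᵥ x = ∑ i, dvec i * x i ^ 2 := by
          simp only [dotProduct, mulVec_diagonal]
          apply Finset.sum_congr rfl
          intro i _
          ring
        calc x ⬝ᵥ R *ᵥ x ≤ K * ∑ i, x i ^ 2 := hKb x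
          _ = ∑ i, K * x i ^ 2 := Finset.mul_sum _ _ _
          _ ≤ ∑ i, c * dvec i * x i ^ 2 := by
              apply Finset.sum_le_sum
              intro i _
              exact mul_le_mul_of_nonneg_right (hcd i) (sq_nonneg _)
          _ = c * ∑ i, dvec i * x i ^ 2 := by
              rw [Finset.mul_sum]
              congr 1
              funext i
              ring
          _ = c • (x ⬝ᵥ (Matrix.diagonal dvec) *ᵥ x) := by rw [e1]; simp
    have hsplit : c • X = V * R * Vᵀ + V * (c • Matrix.diagonal dvec - R) * Vᵀ := by
      rw [hXdecomp]
      rw [← Matrix.add_mul, ← Matrix.mul_add, add_sub_cancel, Matrix.mul_smul, Matrix.smul_mul]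
    have hmem : V * R * Vᵀ + V * (c • Matrix.diagonal dvec - R) * Vᵀ ∈ f := by
      rw [← hsplit]; exact hcone X hXf c hc0
    exact (hface _ _ (psd_conj' V hR) (psd_conj' V hpsd2) hmem).1
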